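/- Let (M, M', μ) be a dual pair over unital rings A, B, with elementary ring S = M ⊗_A M'. If there exists an element Σ u'_i ⊗ u_i ∈ M' ⊗_B M, commuting with all elements of A, such that μ(Σ u'_i ⊗ u_i) = 1_A, then M is a firm left S-module, i.e., the multiplication map S ⊗_S M → M is an isomorphism. -/

import Mathlib

open MulOpposite

/-- Relations defining the tensor product `M' ⊗_B M`. -/
def relMM' (B M M' : Type) [Ring B] [AddCommGroup M] [Module B M]
    [AddCommGroup M'] [Module Bᵐᵒᵖ M'] :
    AddSubgroup (FreeAbelianGroup (M' × M)) :=
  AddSubgroup.closure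
    ({z | ∃ x y m, z = FreeAbelianGroup.of (x + y, m) - FreeAbelianGroup.of (x, m)
        - FreeAbelianGroup.of (y, m)} ∪
     {z | ∃ x m n, z = FreeAbelianGroup.of (x, m + n) - FreeAbelianGroup.of (x, m)
        - FreeAbelianGroup.of (x, n)} ∪
     {z | ∃ (x : M') (b : B) (m : M), z = FreeAbelianGroup.of (op b • x, m) - FreeAbelianGroup.of (x, b • m)})

/-- Relations defining the tensor product `S ⊗_S M` for the (non-unital) ring `S`
acting on `M` by `act`. -/
def relSM (S M : Type) [AddCommGroup S] [AddCommGroup M]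
    (mul : S → S → S) (act : S → M → M) :
    AddSubgroup (FreeAbelianGroup (S × M)) :=
  AddSubgroup.closure
    ({z | ∃ s s' m, z = FreeAbelianGroup.of (s + s', m) - FreeAbelianGroup.of (s, m)
        - FreeAbelianGroup.of (s', m)} ∪
     {z | ∃ s m n, z = FreeAbelianGroup.of (s, m + n) - FreeAbelianGroup.of (s, m)
        - FreeAbelianGroup.of (s, n)} ∪
     {z | ∃ s s' m, z = FreeAbelianGroup.of (mul s s', m) - FreeAbelianGroup.of (s, act s' m)})

/-- If a dual pair `(M, M', μ)` admits an element `Σ u'ᵢ ⊗ uᵢ ∈ (M' ⊗_B M)^A` with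
`μ(Σ u'ᵢ ⊗ uᵢ) = 1_A`, then `M` is a firm left module over the elementary ring
`S = M ⊗_A M'`, i.e. `S ⊗_S M → M` is bijective. -/
theorem stmt8 (A B M M' S : Type) [Ring A] [Ring B]
    [AddCommGroup M] [Module B M] [Module Aᵐᵒᵖ M] [SMulCommClass B Aᵐᵒᵖ M]
    [AddCommGroup M'] [Module A M'] [Module Bᵐᵒᵖ M'] [SMulCommClass A Bᵐᵒᵖ M']
    [AddCommGroup S]
    (μ : M' → M → A)
    (μ_addl : ∀ x y m, μ (x + y) m = μ x m + μ y m)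
    (μ_addr : ∀ x m n, μ x (m + n) = μ x m + μ x n)
    (μ_bal : ∀ x (b : B) m, μ (op b • x) m = μ x (b • m))
    (μ_linl : ∀ (a : A) x m, μ (a • x) m = a * μ x m)
    (μ_linr : ∀ x m (a : A), μ x (op a • m) = μ x m * a)
    (t : M → M' → S)
    (t_addl : ∀ m n x, t (m + n) x = t m x + t n x)
    (t_addr : ∀ m x y, t m (x + y) = t m x + t m y)
    (t_bal : ∀ m (a : A) x, t (op a • m) x = t m (a • x))
    (t_univ : ∀ (X : Type) [AddCommGroup X] (g : M → M' → X),
        (∀ m n x, g (m + n) x = g m x + g n x) →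
        (∀ m x y, g m (x + y) = g m x + g m y) →
        (∀ m (a : A) x, g (op a • m) x = g m (a • x)) →
        ∃! φ : S →+ X, ∀ m x, φ (t m x) = g m x)
    (mul : S → S → S)
    (mul_addl : ∀ s s' s'' : S, mul (s + s') s'' = mul s s'' + mul s' s'')
    (mul_addr : ∀ s s' s'' : S, mul s (s' + s'') = mul s s' + mul s s'')
    (mul_def : ∀ m x n y, mul (t m x) (t n y) = t (op (μ x n) • m) y)
    -- the left action of S on M
    (act : S → M → M)
    (act_addl : ∀ s s' m, act (s + s') m = act s m + act s' m)
    (act_addr : ∀ s m n, act s (m + n) = act s m + act s n)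
    (act_def : ∀ m x n, act (t m x) n = op (μ x n) • m)
    (act_mul : ∀ s s' m, act (mul s s') m = act s (act s' m))
    -- the element Σ u'ᵢ ⊗ uᵢ ∈ (M' ⊗_B M)^A with μ(Σ u'ᵢ ⊗ uᵢ) = 1
    (k : ℕ) (u' : Fin k → M') (u : Fin k → M)
    (hcentral : ∀ a : A,
        (∑ i, (QuotientAddGroup.mk (FreeAbelianGroup.of (a • u' i, u i)) :
            FreeAbelianGroup (M' × M) ⧸ relMM' B M M')) =
        ∑ i, (QuotientAddGroup.mk (FreeAbelianGroup.of (u' i, op a • u i)) :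
            FreeAbelianGroup (M' × M) ⧸ relMM' B M M'))
    (hunit : ∑ i, μ (u' i) (u i) = 1) :
    -- M is a firm left S-module : S ⊗_S M → M is an isomorphism
    ∃ φ : (FreeAbelianGroup (S × M) ⧸ relSM S M mul act) →+ M,
      (∀ s m, φ (QuotientAddGroup.mk (FreeAbelianGroup.of (s, m))) = act s m) ∧
      Function.Bijective φ := by
    classical
  set Q := FreeAbelianGroup (S × M) ⧸ relSM S M mul act with hQ
  -- membership of the generators
  have mem1 : ∀ s s' m, FreeAbelianGroup.of (s + s', m) - FreeAbelianGroup.of (s, m)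
      - FreeAbelianGroup.of (s', m) ∈ relSM S M mul act := by
    intro s s' m
    exact AddSubgroup.subset_closure (Or.inl (Or.inl ⟨s, s', m, rfl⟩))
  have mem2 : ∀ s m n, FreeAbelianGroup.of (s, m + n) - FreeAbelianGroup.of (s, m)
      - FreeAbelianGroup.of (s, n) ∈ relSM S M mul act := by
    intro s m n
    exact AddSubgroup.subset_closure (Or.inl (Or.inr ⟨s, m, n, rfl⟩))
  have mem3 : ∀ s s' m, FreeAbelianGroup.of (mul s s', m)
      - FreeAbelianGroup.of (s, act s' m) ∈ relSM S M mul act := by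
    intro s s' m
    exact AddSubgroup.subset_closure (Or.inr ⟨s, s', m, rfl⟩)
  -- relations in the quotient
  have q1 : ∀ s s' m, (QuotientAddGroup.mk (FreeAbelianGroup.of (s + s', m)) : Q)
      = QuotientAddGroup.mk (FreeAbelianGroup.of (s, m))
        + QuotientAddGroup.mk (FreeAbelianGroup.of (s', m)) := by
    intro s s' m
    have h := (QuotientAddGroup.eq_zero_iff _).2 (mem1 s s' m)
    rw [QuotientAddGroup.mk_sub, QuotientAddGroup.mk_sub, sub_sub, sub_eq_zero] at h
    exact h
  have q2 : ∀ s m n, (QuotientAddGroup.mk (FreeAbelianGroup.of (s, m + n)) : Q)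
      = QuotientAddGroup.mk (FreeAbelianGroup.of (s, m))
        + QuotientAddGroup.mk (FreeAbelianGroup.of (s, n)) := by
    intro s m n
    have h := (QuotientAddGroup.eq_zero_iff _).2 (mem2 s m n)
    rw [QuotientAddGroup.mk_sub, QuotientAddGroup.mk_sub, sub_sub, sub_eq_zero] at h
    exact h
  have q3 : ∀ s s' m, (QuotientAddGroup.mk (FreeAbelianGroup.of (mul s s', m)) : Q)
      = QuotientAddGroup.mk (FreeAbelianGroup.of (s, act s' m)) := by
    intro s s' m
    have h := (QuotientAddGroup.eq_zero_iff _).2 (mem3 s s' m)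
    rw [QuotientAddGroup.mk_sub, sub_eq_zero] at h
    exact h
  -- for each s, m ↦ ⟦of (s, m)⟧ is an additive hom
  let homS : S → (M →+ Q) := fun s => AddMonoidHom.mk'
    (fun m => QuotientAddGroup.mk (FreeAbelianGroup.of (s, m))) (fun m n => q2 s m n)
  -- the map φ
  let f0 : FreeAbelianGroup (S × M) →+ M := FreeAbelianGroup.lift (fun p => act p.1 p.2)
  have hf0 : ∀ p : S × M, f0 (FreeAbelianGroup.of p) = act p.1 p.2 := by
    intro p; simp [f0]
  have hker : ∀ z ∈ relSM S M mul act, f0 z = 0 := by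
    intro z hz
    refine AddSubgroup.closure_induction ?_ (map_zero f0) ?_ ?_ hz
    · rintro w ((⟨s, s', m, rfl⟩ | ⟨s, m, n, rfl⟩) | ⟨s, s', m, rfl⟩) <;>
        simp [hf0, act_addl, act_addr, act_mul]
    · intro x y _ _ hx hy; simp [map_add, hx, hy]
    · intro x _ hx; simp [map_neg, hx]
  let φ : Q →+ M := QuotientAddGroup.lift (relSM S M mul act) f0 hker
  have hφ : ∀ s m, φ (QuotientAddGroup.mk (FreeAbelianGroup.of (s, m))) = act s m := by
    intro s m
    show f0 (FreeAbelianGroup.of (s, m)) = act s m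
    exact hf0 (s, m)
  -- key lemma : t (act s m) x = mul s (t m x)
  have key : ∀ s m x, t (act s m) x = mul s (t m x) := by
    intro s m x
    obtain ⟨ψ, hψ, huniq⟩ := t_univ S (fun n y => mul (t n y) (t m x))
      (fun n n' y => by
        show mul (t (n + n') y) (t m x) = mul (t n y) (t m x) + mul (t n' y) (t m x)
        rw [t_addl, mul_addl])
      (fun n y y' => by
        show mul (t n (y + y')) (t m x) = mul (t n y) (t m x) + mul (t n y') (t m x)
        rw [t_addr, mul_addl])
      (fun n a y => by
        show mul (t (op a • n) y) (t m x) = mul (t n (a • y)) (t m x)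
        rw [t_bal])
    let h1 : S →+ S := AddMonoidHom.mk' (fun s => mul s (t m x))
      (fun a b => mul_addl a b _)
    let h2 : S →+ S := AddMonoidHom.mk' (fun s => t (act s m) x)
      (fun a b => by show t (act (a + b) m) x = t (act a m) x + t (act b m) x
                     rw [act_addl, t_addl])
    have e1 : h1 = ψ := huniq h1 (fun n y => rfl)
    have e2 : h2 = ψ := huniq h2 (fun n y => by
      show t (act (t n y) m) x = mul (t n y) (t m x)
      rw [act_def, mul_def])
    have := congrArg (fun χ : S →+ S => χ s) (e2.trans e1.symm)
    simpa [h1, h2] using this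
  -- the sum ∑ act (t m (u' i)) (u i) = m
  have hsum : ∀ m : M, ∑ i, act (t m (u' i)) (u i) = m := by
    intro m
    have : ∑ i, act (t m (u' i)) (u i) = ∑ i, op (μ (u' i) (u i)) • m := by
      refine Finset.sum_congr rfl fun i _ => ?_
      rw [act_def]
    rw [this, ← Finset.sum_smul]
    have : (∑ i, op (μ (u' i) (u i))) = op (∑ i, μ (u' i) (u i)) := by
      simp
    rw [this, hunit, op_one, one_smul]
  -- the map β
  let β : M →+ Q := AddMonoidHom.mk'
    (fun m => ∑ i, QuotientAddGroup.mk (FreeAbelianGroup.of (t m (u' i), u i)))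
    (fun m n => by
      rw [← Finset.sum_add_distrib]
      refine Finset.sum_congr rfl fun i _ => ?_
      rw [t_addl]
      exact q1 _ _ _)
  have hφβ : ∀ m, φ (β m) = m := by
    intro m
    show φ (∑ i, QuotientAddGroup.mk (FreeAbelianGroup.of (t m (u' i), u i))) = m
    rw [map_sum]
    simp only [hφ]
    exact hsum m
  have hβact : ∀ s m, β (act s m)
      = QuotientAddGroup.mk (FreeAbelianGroup.of (s, m)) := by
    intro s m
    show (∑ i, QuotientAddGroup.mk (FreeAbelianGroup.of (t (act s m) (u' i), u i)) : Q)
      = QuotientAddGroup.mk (FreeAbelianGroup.of (s, m))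
    have : (∑ i, QuotientAddGroup.mk (FreeAbelianGroup.of (t (act s m) (u' i), u i)) : Q)
        = ∑ i, homS s (act (t m (u' i)) (u i)) := by
      refine Finset.sum_congr rfl fun i _ => ?_
      rw [key]
      exact q3 _ _ _
    rw [this, ← map_sum, hsum]
    rfl
  have hβφ : ∀ q : Q, β (φ q) = q := by
    intro q
    induction q using QuotientAddGroup.induction_on with
    | H z =>
      induction z using FreeAbelianGroup.induction_on with
      | zero => simp
      | of p => rw [hφ p.1 p.2, hβact]
      | neg p hp =>
        rw [QuotientAddGroup.mk_neg, map_neg, map_neg, hp]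
      | add x y hx hy =>
        rw [QuotientAddGroup.mk_add, map_add, map_add, hx, hy]
  exact ⟨φ, hφ, fun a b h => by rw [← hβφ a, h, hβφ b], fun m => ⟨β m, hφβ m⟩⟩
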